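/- Let A be a unital algebra over ℂ that is generated as an algebra by its idempotents, M a unital A-bimodule, and m, n positive integers with m ≠ n. If δ : A → M is an (m,n)-Jordan derivable mapping at zero with δ(1) = 0, then δ = 0. -/
import Mathlib


open MulOpposite

/-- If `A` is generated by its idempotents, then every
`(m,n)`-Jordan derivable mapping at zero with `δ 1 = 0` vanishes. -/
theorem mn_jordan_derivable_at_zero_eq_zero_of_generated_by_idempotents
    {A M : Type*} [Ring A] [Algebra ℂ A]
    [AddCommGroup M] [Module ℂ M] [Module A M] [Module Aᵐᵒᵖ M]
    [SMulCommClass A Aᵐᵒᵖ M]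
    (m n : ℕ) (hm : 0 < m) (hn : 0 < n) (hmn : m ≠ n)
    (δ : A → M) (hadd : ∀ a b : A, δ (a + b) = δ a + δ b)
    (hδ1 : δ 1 = 0)
    (hzero : ∀ X Y : A, X * Y = 0 → Y * X = 0 →
      (m + n) • δ (X * Y + Y * X) =
        (2 * m) • (op Y • δ X) + (2 * m) • (op X • δ Y)
          + (2 * n) • (X • δ Y) + (2 * n) • (Y • δ X))
    (hgen : Subring.closure {P : A | P * P = P} = ⊤) :
    ∀ a : A, δ a = 0 := by
  -- torsion-freeness of `M` (it is a `ℂ`-vector space)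
  have tf : ∀ (k : ℤ), k ≠ 0 → ∀ v : M, k • v = 0 → v = 0 := by
    intro k hk v h
    have h2 : (k:ℂ) • v = 0 := by rw [Int.cast_smul_eq_zsmul]; exact h
    have h3 := congrArg (fun x => (k:ℂ)⁻¹ • x) h2
    simpa [smul_smul, inv_mul_cancel₀ (by exact_mod_cast hk : (k:ℂ) ≠ 0)] using h3
  have hm' : ((m:ℤ)) ≠ 0 := by exact_mod_cast hm.ne'
  have hn' : ((n:ℤ)) ≠ 0 := by exact_mod_cast hn.ne'
  have hmn' : ((m:ℤ)) - n ≠ 0 := sub_ne_zero.mpr (by exact_mod_cast hmn)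
  have hmn2 : ((m:ℤ)) + n ≠ 0 := by positivity
  -- basic additivity facts
  have hδ0 : δ 0 = 0 := by
    have h := hadd 0 0
    rw [add_zero] at h
    exact (add_eq_left.mp h.symm)
  have hneg : ∀ a : A, δ (-a) = -δ a := by
    intro a
    have h : δ a + δ (-a) = 0 := by rw [← hadd, add_neg_cancel, hδ0]
    exact eq_neg_of_add_eq_zero_right h
  have hsub : ∀ a b : A, δ (a - b) = δ a - δ b := by
    intro a b
    rw [sub_eq_add_neg, hadd, hneg, sub_eq_add_neg]
  have natz : ∀ (k : ℕ) (z : M), ((k:ℤ)) • z = k • z := fun k z => natCast_zsmul z k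
  -- the cleaned-up hypothesis over ℤ
  have h' : ∀ X Y : A, X * Y = 0 → Y * X = 0 →
      (m:ℤ) • (op Y • δ X) + (m:ℤ) • (op X • δ Y)
        + (n:ℤ) • (X • δ Y) + (n:ℤ) • (Y • δ X) = 0 := by
    intro X Y h1 h2
    have h := hzero X Y h1 h2
    rw [h1, h2, add_zero, hδ0, smul_zero] at h
    set u1 := op Y • δ X with hu1
    set u2 := op X • δ Y with hu2
    set u3 := X • δ Y with hu3
    set u4 := Y • δ X with hu4
    clear_value u1 u2 u3 u4
    rw [← natz, ← natz, ← natz, ← natz] at h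
    push_cast at h
    apply tf 2 (by norm_num)
    linear_combination (norm := module) -h
  -- δ vanishes on idempotents
  have hidem : ∀ P : A, P * P = P → δ P = 0 := by
    intro P hP
    have hPY : P * (1 - P) = 0 := by rw [mul_sub, mul_one, hP, sub_self]
    have hYP : (1 - P) * P = 0 := by rw [sub_mul, one_mul, hP, sub_self]
    have h1 := h' P (1 - P) hPY hYP
    have hd : δ (1 - P) = -δ P := by rw [hsub, hδ1, zero_sub]
    rw [hd, op_sub, op_one, sub_smul, one_smul, sub_smul, one_smul] at h1
    simp only [smul_neg] at h1
    set r := δ P with hr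
    have sc : ∀ (Q : A) (k : ℤ) (x : M), Q • (k • x) = k • (Q • x) :=
      fun Q k x => (smul_comm k Q x).symm
    have sco : ∀ (Q : Aᵐᵒᵖ) (k : ℤ) (x : M), Q • (k • x) = k • (Q • x) :=
      fun Q k x => (smul_comm k Q x).symm
    have scc : ∀ x : M, op P • (P • x) = P • (op P • x) :=
      fun x => (smul_comm P (op P) x).symm
    have hPP : ∀ x : M, P • (P • x) = P • x := by
      intro x; rw [smul_smul, hP]
    have hRR : ∀ x : M, op P • (op P • x) = op P • x := by
      intro x; rw [smul_smul, ← op_mul, hP]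
    -- apply the left action of P
    have e1 := congrArg (fun x => P • x) h1
    simp only [smul_add, smul_sub, smul_neg, smul_zero, sc, hPP] at e1
    -- apply the right action of P
    have e2 := congrArg (fun x => op P • x) h1
    simp only [smul_add, smul_sub, smul_neg, smul_zero, sco, scc, hPP, hRR] at e2
    set LRr := P • (op P • r) with hLRr
    set Lr := P • r with hLr
    set Rr := op P • r with hRr
    clear_value LRr Lr Rr
    -- combine
    have e3 : ((m:ℤ) - n) • ((n:ℤ) • Lr + (m:ℤ) • Rr) = 0 := by
      linear_combination (norm := module) (n:ℤ) • e1 - (m:ℤ) • e2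
    have e4 : (n:ℤ) • Lr + (m:ℤ) • Rr = 0 := tf _ hmn' _ e3
    have e5 : ((m:ℤ) + n) • r = 0 := by
      linear_combination (norm := module) h1 + (2:ℤ) • e4
    exact tf _ hmn2 _ e5
  -- corner lemma: for idempotent P, δ (P a P) is fixed by the left action of P
  have hcornerL : ∀ (P a : A), P * P = P → P • δ (P * a * P) = δ (P * a * P) := by
    intro P a hP
    have h0 : (1 - P) * P = 0 := by rw [sub_mul, one_mul, hP, sub_self]
    have h0' : P * (1 - P) = 0 := by rw [mul_sub, mul_one, hP, sub_self]
    have hXY : (1 - P) * (P * a * P) = 0 := by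
      calc (1 - P) * (P * a * P) = ((1 - P) * P) * (a * P) := by noncomm_ring
        _ = 0 := by rw [h0, zero_mul]
    have hYX : (P * a * P) * (1 - P) = 0 := by
      calc (P * a * P) * (1 - P) = (P * a) * (P * (1 - P)) := by noncomm_ring
        _ = 0 := by rw [h0', mul_zero]
    have h1 := h' (1 - P) (P * a * P) hXY hYX
    have hd : δ (1 - P) = 0 := by rw [hsub, hδ1, hidem P hP, sub_zero]
    rw [hd] at h1
    simp only [smul_zero, add_zero, zero_add] at h1
    rw [op_sub, op_one, sub_smul, one_smul, sub_smul, one_smul] at h1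
    set w := δ (P * a * P) with hw
    have sc : ∀ (Q : A) (k : ℤ) (x : M), Q • (k • x) = k • (Q • x) :=
      fun Q k x => (smul_comm k Q x).symm
    have sco : ∀ (Q : Aᵐᵒᵖ) (k : ℤ) (x : M), Q • (k • x) = k • (Q • x) :=
      fun Q k x => (smul_comm k Q x).symm
    have scc : ∀ x : M, op P • (P • x) = P • (op P • x) :=
      fun x => (smul_comm P (op P) x).symm
    have hPP : ∀ x : M, P • (P • x) = P • x := by
      intro x; rw [smul_smul, hP]
    have hRR : ∀ x : M, op P • (op P • x) = op P • x := by
      intro x; rw [smul_smul, ← op_mul, hP]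
    have e1 := congrArg (fun x => P • x) h1
    simp only [smul_add, smul_sub, smul_zero, sc, hPP] at e1
    have e2 := congrArg (fun x => op P • x) h1
    simp only [smul_add, smul_sub, smul_zero, sco, scc, hPP, hRR] at e2
    set LRw := P • (op P • w) with hLRw
    set Lw := P • w with hLw
    set Rw := op P • w with hRw
    clear_value LRw Lw Rw
    have eA : (m:ℤ) • (Lw - LRw) = 0 := by
      linear_combination (norm := module) e1
    have eB : (n:ℤ) • (Rw - LRw) = 0 := by
      linear_combination (norm := module) e2
    have eA' : Lw - LRw = 0 := tf _ hm' _ eA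
    have eB' : Rw - LRw = 0 := tf _ hn' _ eB
    have eC : ((m:ℤ) + n) • (w - LRw) = 0 := by
      linear_combination (norm := module) h1 + (m:ℤ) • eB' + (n:ℤ) • eA'
    have eC' : w - LRw = 0 := tf _ hmn2 _ eC
    -- goal is Lw = w
    linear_combination (norm := module) eA' - eC'
  -- corner lemma: P • δ ((1-P) a (1-P)) = 0
  have hcorner0 : ∀ (P a : A), P * P = P → P • δ ((1 - P) * a * (1 - P)) = 0 := by
    intro P a hP
    have h0 : (1 - P) * P = 0 := by rw [sub_mul, one_mul, hP, sub_self]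
    have h0' : P * (1 - P) = 0 := by rw [mul_sub, mul_one, hP, sub_self]
    have hXY : P * ((1 - P) * a * (1 - P)) = 0 := by
      calc P * ((1 - P) * a * (1 - P)) = (P * (1 - P)) * (a * (1 - P)) := by noncomm_ring
        _ = 0 := by rw [h0', zero_mul]
    have hYX : ((1 - P) * a * (1 - P)) * P = 0 := by
      calc ((1 - P) * a * (1 - P)) * P = ((1 - P) * a) * ((1 - P) * P) := by noncomm_ring
        _ = 0 := by rw [h0, mul_zero]
    have h1 := h' P ((1 - P) * a * (1 - P)) hXY hYX
    rw [hidem P hP] at h1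
    simp only [smul_zero, add_zero, zero_add] at h1
    set v := δ ((1 - P) * a * (1 - P)) with hv
    have sc : ∀ (Q : A) (k : ℤ) (x : M), Q • (k • x) = k • (Q • x) :=
      fun Q k x => (smul_comm k Q x).symm
    have sco : ∀ (Q : Aᵐᵒᵖ) (k : ℤ) (x : M), Q • (k • x) = k • (Q • x) :=
      fun Q k x => (smul_comm k Q x).symm
    have scc : ∀ x : M, op P • (P • x) = P • (op P • x) :=
      fun x => (smul_comm P (op P) x).symm
    have hPP : ∀ x : M, P • (P • x) = P • x := by
      intro x; rw [smul_smul, hP]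
    have hRR : ∀ x : M, op P • (op P • x) = op P • x := by
      intro x; rw [smul_smul, ← op_mul, hP]
    have e1 := congrArg (fun x => P • x) h1
    simp only [smul_add, smul_zero, sc, hPP] at e1
    have e2 := congrArg (fun x => op P • x) h1
    simp only [smul_add, smul_zero, sco, scc, hPP, hRR] at e2
    set LRv := P • (op P • v) with hLRv
    set Lv := P • v with hLv
    set Rv := op P • v with hRv
    clear_value LRv Lv Rv
    have eA : (m:ℤ) • (Rv - LRv) = 0 := by
      linear_combination (norm := module) h1 - e1
    have eB : (n:ℤ) • (Lv - LRv) = 0 := by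
      linear_combination (norm := module) h1 - e2
    have eA' : Rv - LRv = 0 := tf _ hm' _ eA
    have eB' : Lv - LRv = 0 := tf _ hn' _ eB
    have eC : ((m:ℤ) + n) • LRv = 0 := by
      linear_combination (norm := module) h1 - (m:ℤ) • eA' - (n:ℤ) • eB'
    have eC' : LRv = 0 := tf _ hmn2 _ eC
    -- goal is Lv = 0
    linear_combination (norm := module) eB' + eC'
  -- off-diagonal corners vanish
  have hoffR : ∀ (P a : A), P * P = P → δ (P * a * (1 - P)) = 0 := by
    intro P a hP
    have h0 : (1 - P) * P = 0 := by rw [sub_mul, one_mul, hP, sub_self]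
    set Q := P * a * (1 - P) with hQ
    have h2 : P * Q = Q := by
      calc P * (P * a * (1 - P)) = (P * P) * a * (1 - P) := by noncomm_ring
        _ = Q := by rw [hP]
    have h3 : Q * P = 0 := by
      calc (P * a * (1 - P)) * P = (P * a) * ((1 - P) * P) := by noncomm_ring
        _ = 0 := by rw [h0, mul_zero]
    have h4 : Q * Q = 0 := by
      calc Q * Q = (Q * P) * (a * (1 - P)) := by rw [hQ]; noncomm_ring
        _ = 0 := by rw [h3, zero_mul]
    have hE : (P + Q) * (P + Q) = P + Q := by
      rw [add_mul, mul_add, mul_add, hP, h2, h3, h4, zero_add, add_zero]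
    have h5 := hidem (P + Q) hE
    rw [hadd, hidem P hP, zero_add] at h5
    exact h5
  have hoffL : ∀ (P a : A), P * P = P → δ ((1 - P) * a * P) = 0 := by
    intro P a hP
    have h0' : P * (1 - P) = 0 := by rw [mul_sub, mul_one, hP, sub_self]
    set Q := (1 - P) * a * P with hQ
    have h2 : Q * P = Q := by
      calc ((1 - P) * a * P) * P = (1 - P) * a * (P * P) := by noncomm_ring
        _ = Q := by rw [hP]
    have h3 : P * Q = 0 := by
      calc P * ((1 - P) * a * P) = (P * (1 - P)) * (a * P) := by noncomm_ring
        _ = 0 := by rw [h0', zero_mul]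
    have h4 : Q * Q = 0 := by
      calc Q * Q = ((1 - P) * a) * (P * Q) := by rw [hQ]; noncomm_ring
        _ = 0 := by rw [h3, mul_zero]
    have hE : (P + Q) * (P + Q) = P + Q := by
      rw [add_mul, mul_add, mul_add, hP, h2, h3, h4, add_zero, add_zero]
    have h5 := hidem (P + Q) hE
    rw [hadd, hidem P hP, zero_add] at h5
    exact h5
  -- for idempotent P : δ (P * a) = P • δ a
  have hPa : ∀ (P a : A), P * P = P → δ (P * a) = P • δ a := by
    intro P a hP
    have d1 : P * a = P * a * P + P * a * (1 - P) := by noncomm_ring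
    have d2 : a = P * a * P + (P * a * (1 - P) + ((1 - P) * a * P
        + (1 - P) * a * (1 - P))) := by noncomm_ring
    have e1 : δ (P * a) = δ (P * a * P) := by
      conv_lhs => rw [d1]
      rw [hadd (P * a * P) (P * a * (1 - P)), hoffR P a hP, add_zero]
    have e2 : δ a = δ (P * a * P) + δ ((1 - P) * a * (1 - P)) := by
      conv_lhs => rw [d2]
      rw [hadd, hadd, hadd, hoffR P a hP, hoffL P a hP, zero_add, zero_add]
    rw [e1, e2, smul_add, hcornerL P a hP, hcorner0 P a hP, add_zero]
  -- closure induction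
  have key : ∀ x b : A, δ (x * b) = x • δ b := by
    intro x
    have hx : x ∈ Subring.closure {P : A | P * P = P} := by rw [hgen]; trivial
    refine Subring.closure_induction
      (p := fun x _ => ∀ b : A, δ (x * b) = x • δ b)
      ?_ ?_ ?_ ?_ ?_ ?_ hx
    · intro P hPmem b; exact hPa P b hPmem
    · intro b; rw [zero_mul, hδ0, zero_smul]
    · intro b; rw [one_mul, one_smul]
    · intro x y _ _ ihx ihy b; rw [add_mul, hadd, ihx, ihy, add_smul]
    · intro x _ ih b; rw [neg_mul, hneg, ih, neg_smul]
    · intro x y _ _ ihx ihy b; rw [mul_assoc, ihx, ihy, mul_smul]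
  intro a
  have h := key a 1
  rwa [mul_one, hδ1, smul_zero] at h
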